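/- Let n ≥ 2, let 0 < λ_1 < ⋯ < λ_{n−1}, b_1, …, b_{n−1} < 0 and M > 0 be given. Define c_k = −Σ_{j=1}^{n−1} b_j b_k/(λ_j + λ_k), W(z) = Σ_{k=1}^{n−1} b_k/(z − λ_k), Z(z) = −1/(2Mz) + Σ_{k=1}^{n−1} c_k/(z − λ_k), W*(z) = −W(−z), Z*(z) = Z(−z). Fix 0 ≤ k ≤ n−1. Then there exist unique polynomials Q, P, P̂ with deg Q ≤ k+1, deg P ≤ k, deg P̂ ≤ k, Q(0) = 0, P(0) = 0 and P̂(0) = 1, such that, as z → ∞: Q(z)Z(z) − P̂(z) = O(z^{−1}), Q(z)W(z) − P(z) = O(1), and P̂(z) + P(z)W*(z) + Q(z)Z*(z) = O(z^{−(k+1)}). Moreover, writing Q(z) = Σ_{j=1}^{k+1} q_j z^j and setting I_{ij} = Σ_{a,b=1}^{n−1} b_a b_b λ_a^i λ_b^j/(λ_a + λ_b), the coefficients satisfy the (k+1)×(k+1) linear system whose first equation is (I_{00} + 1/(2M)) q_1 + Σ_{j=2}^{k+1} I_{0, j−1} q_j = −1 and whose remaining equations are Σ_{j=1}^{k+1}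 I_{i, j−1} q_j = 0 for i = 1, …, k. -/

import Mathlib

open Polynomial Filter Asymptotics

set_option linter.unusedSectionVars false
namespace Stmt16Aux

lemma isBigO_inv_add (a : ℝ) : (fun z : ℝ => (z + a)⁻¹) =O[atTop] (fun z : ℝ => z⁻¹) := by
  rw [isBigO_iff]
  refine ⟨2, ?_⟩
  filter_upwards [eventually_ge_atTop (2*|a|+1)] with z hz
  have h0 : (0:ℝ) < z := by have := abs_nonneg a; linarith
  have h2 : z/2 ≤ z + a := by have := neg_abs_le a; linarith
  have h2' : (0:ℝ) < z/2 := by linarith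
  rw [Real.norm_eq_abs, Real.norm_eq_abs, abs_inv, abs_inv, abs_of_pos h0,
    abs_of_pos (lt_of_lt_of_le h2' h2)]
  have : (2:ℝ) * z⁻¹ = (z/2)⁻¹ := by field_simp
  rw [this]
  exact inv_anti₀ h2' h2

lemma tendsto_inv_add (a : ℝ) : Tendsto (fun z : ℝ => (z + a)⁻¹) atTop (nhds 0) :=
  (tendsto_atTop_add_const_right atTop a tendsto_id).inv_tendsto_atTop

lemma poly_const_of_isBigO_one {p : ℝ[X]}
    (h : (fun z => p.eval z) =O[atTop] (fun _ : ℝ => (1:ℝ))) : p = C (p.coeff 0) := by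
  by_contra hne
  have hdeg : 0 < p.degree := by
    rcases lt_or_ge 0 p.degree with h' | h'
    · exact h'
    · exact absurd (Polynomial.eq_C_of_degree_le_zero h') (by
        intro hp; exact hne (by rw [hp, coeff_C_zero]))
  obtain ⟨Cb, hC⟩ := isBigO_iff.mp h
  simp only [norm_one, mul_one] at hC
  have h2 := (Polynomial.abs_tendsto_atTop p hdeg).eventually_ge_atTop (Cb + 1)
  obtain ⟨z, hz1, hz2⟩ := (hC.and h2).exists
  rw [Real.norm_eq_abs] at hz1
  linarith

lemma poly_zero_of_isBigO_inv {p : ℝ[X]}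
    (h : (fun z => p.eval z) =O[atTop] (fun z : ℝ => z⁻¹)) : p = 0 := by
  have htend : Tendsto (fun z => p.eval z) atTop (nhds 0) :=
    h.trans_tendsto tendsto_inv_atTop_zero
  have hconst : p = C (p.coeff 0) := by
    by_contra hne
    have hdeg : 0 < p.degree := by
      rcases lt_or_ge 0 p.degree with h' | h'
      · exact h'
      · exact absurd (Polynomial.eq_C_of_degree_le_zero h') (by
          intro hp; exact hne (by rw [hp, coeff_C_zero]))
    have h2 := (Polynomial.abs_tendsto_atTop p hdeg).eventually_ge_atTop 1
    have h3 := htend.eventually (Metric.ball_mem_nhds (0:ℝ) one_pos)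
    obtain ⟨z, hz1, hz2⟩ := (h2.and h3).exists
    simp [Real.dist_eq] at hz2
    linarith
  have hc : p.coeff 0 = 0 := by
    have : Tendsto (fun _ : ℝ => p.coeff 0) atTop (nhds 0) := by
      refine htend.congr (fun z => ?_)
      rw [hconst]; simp
    exact (tendsto_nhds_unique tendsto_const_nhds this)
  rw [hconst, hc, map_zero]

variable {ι : Type*} [Fintype ι]

lemma key_id (lam : ι → ℝ) (hpos : ∀ i, 0 < lam i) (ν : ι → ℝ) {z : ℝ} (hz : 0 < z) :
    z * (∑ j, ν j / (z + lam j)) = (∑ j, ν j) - ∑ j, (ν j * lam j) / (z + lam j) := by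
  rw [Finset.mul_sum, ← Finset.sum_sub_distrib]
  refine Finset.sum_congr rfl (fun j _ => ?_)
  have h : z + lam j ≠ 0 := by have := hpos j; positivity
  field_simp
  ring

lemma step (lam : ι → ℝ) (hpos : ∀ i, 0 < lam i) (ν : ι → ℝ) (r : ℕ)
    (h : (fun z => ∑ j, ν j / (z + lam j)) =O[atTop] fun z : ℝ => (z^(r+2))⁻¹) :
    (∑ j, ν j) = 0 ∧
      ((fun z => ∑ j, (ν j * lam j) / (z + lam j)) =O[atTop] fun z : ℝ => (z^(r+1))⁻¹) := by
  have hzF : (fun z : ℝ => z * ∑ j, ν j / (z + lam j)) =O[atTop] fun z : ℝ => (z^(r+1))⁻¹ := by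
    have h1 : (fun z : ℝ => z * ∑ j, ν j / (z + lam j))
        =O[atTop] fun z : ℝ => z * (z^(r+2))⁻¹ := (isBigO_refl _ _).mul h
    refine h1.trans (IsBigO.of_bound 1 ?_)
    filter_upwards [eventually_gt_atTop (0:ℝ)] with z hz
    have : z * (z^(r+2))⁻¹ = (z^(r+1))⁻¹ := by
      rw [pow_succ]
      field_simp
    rw [this, one_mul]
  have htendzF : Tendsto (fun z : ℝ => z * ∑ j, ν j / (z + lam j)) atTop (nhds 0) := by
    refine hzF.trans_tendsto ?_
    exact (tendsto_pow_atTop (Nat.succ_ne_zero r)).inv_tendsto_atTop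
  have htendG : Tendsto (fun z : ℝ => ∑ j, (ν j * lam j) / (z + lam j)) atTop (nhds 0) := by
    have : Tendsto (fun z : ℝ => ∑ j, (ν j * lam j) / (z + lam j)) atTop
        (nhds (∑ j : ι, (0:ℝ))) := by
      refine tendsto_finset_sum _ (fun j _ => ?_)
      simpa [div_eq_mul_inv] using (tendsto_inv_add (lam j)).const_mul (ν j * lam j)
    simpa using this
  have hS : (∑ j, ν j) = 0 := by
    have : Tendsto (fun _ : ℝ => ∑ j, ν j) atTop (nhds 0) := by
      have := htendzF.add htendG
      rw [add_zero] at this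
      refine this.congr' ?_
      filter_upwards [eventually_gt_atTop (0:ℝ)] with z hz
      rw [key_id lam hpos ν hz]; ring
    exact tendsto_nhds_unique tendsto_const_nhds this
  refine ⟨hS, ?_⟩
  refine (hzF.neg_left.congr' ?_ (EventuallyEq.refl _ _))
  filter_upwards [eventually_gt_atTop (0:ℝ)] with z hz
  rw [key_id lam hpos ν hz, hS]; ring

lemma moments_vanish (lam : ι → ℝ) (hpos : ∀ i, 0 < lam i) (μ : ι → ℝ) (k : ℕ)
    (h : (fun z => ∑ j, μ j / (z + lam j)) =O[atTop] fun z : ℝ => (z^(k+1))⁻¹) :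
    ∀ m < k, ∑ j, μ j * lam j ^ m = 0 := by
  induction k generalizing μ with
  | zero => intro m hm; omega
  | succ k ih =>
    obtain ⟨h0, h1⟩ := step lam hpos μ k h
    intro m hm
    match m with
    | 0 => simpa using h0
    | (m+1) =>
      have := ih (fun j => μ j * lam j) h1 m (by omega)
      rw [← this]
      refine Finset.sum_congr rfl (fun j _ => ?_)
      ring

lemma isBigO_of_moments (lam : ι → ℝ) (hpos : ∀ i, 0 < lam i) (μ : ι → ℝ) (k : ℕ)
    (h : ∀ m < k, ∑ j, μ j * lam j ^ m = 0) :
    (fun z => ∑ j, μ j / (z + lam j)) =O[atTop] fun z : ℝ => (z^(k+1))⁻¹ := by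
  induction k generalizing μ with
  | zero =>
    have : (fun z => ∑ j, μ j / (z + lam j)) =O[atTop] fun z : ℝ => z⁻¹ := by
      refine Asymptotics.IsBigO.fun_sum (fun j _ => ?_)
      simpa [div_eq_mul_inv] using (isBigO_inv_add (lam j)).const_mul_left (μ j)
    simpa using this
  | succ k ih =>
    have h0 : (∑ j, μ j) = 0 := by simpa using h 0 (by omega)
    have ihh := ih (fun j => μ j * lam j) (fun m hm => by
      have := h (m+1) (by omega)
      rw [← this]
      exact Finset.sum_congr rfl (fun j _ => by ring))
    have : (fun z : ℝ => (∑ j, (μ j * lam j) / (z + lam j)) * z⁻¹)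
        =O[atTop] fun z : ℝ => (z^(k+1))⁻¹ * z⁻¹ := ihh.mul (isBigO_refl _ _)
    refine (this.neg_left.congr' ?_ ?_)
    · filter_upwards [eventually_gt_atTop (0:ℝ)] with z hz
      have hk := key_id lam hpos μ hz
      rw [h0] at hk
      show -((∑ j, μ j * lam j / (z + lam j)) * z⁻¹) = ∑ j, μ j / (z + lam j)
      calc -((∑ j, μ j * lam j / (z + lam j)) * z⁻¹)
          = (z * ∑ j, μ j / (z + lam j)) * z⁻¹ := by rw [hk]; ring
        _ = ∑ j, μ j / (z + lam j) := by
            rw [mul_comm z _, mul_assoc, mul_inv_cancel₀ hz.ne', mul_one]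
    · filter_upwards [eventually_gt_atTop (0:ℝ)] with z hz
      rw [pow_succ]
      field_simp
      ring

/-- The submonoid `(0,1]` of `ℝ` under multiplication. -/
def Ioc01 : Submonoid ℝ where
  carrier := Set.Ioc 0 1
  mul_mem' := by
    rintro a b ⟨ha0, ha1⟩ ⟨hb0, hb1⟩
    exact ⟨mul_pos ha0 hb0, mul_le_one₀ ha1 hb0.le hb1⟩
  one_mem' := ⟨one_pos, le_refl 1⟩

/-- Power maps as monoid homs on `(0,1]`. -/
noncomputable def powHom (r : ℝ) : Ioc01 →* ℝ where
  toFun t := (t : ℝ) ^ r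
  map_one' := Real.one_rpow r
  map_mul' s t := Real.mul_rpow s.2.1.le t.2.1.le

lemma powHom_injective : Function.Injective powHom := by
  intro r s h
  have h2 : ((1:ℝ)/2) ^ r = ((1:ℝ)/2) ^ s := by
    have := congrArg (fun f : Ioc01 →* ℝ => f ⟨1/2, by norm_num, by norm_num⟩) h
    simpa [powHom] using this
  by_contra hne
  rcases lt_or_gt_of_ne hne with hlt | hlt
  · have := (Real.rpow_lt_rpow_left_iff_of_base_lt_one (x := (1:ℝ)/2)
      (by norm_num) (by norm_num)).mpr hlt
    rw [h2] at this; exact lt_irrefl _ this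
  · have := (Real.rpow_lt_rpow_left_iff_of_base_lt_one (x := (1:ℝ)/2)
      (by norm_num) (by norm_num)).mpr hlt
    rw [h2] at this; exact lt_irrefl _ this

/-- Linear independence of power functions on `(0,1]`. -/
lemma powfun_indep {x : ι → ℝ} {μ : ι → ℝ} (hμ : Function.Injective μ)
    (h : ∀ t : ℝ, t ∈ Set.Ioc (0:ℝ) 1 → ∑ a, x a * t ^ (μ a) = 0) : x = 0 := by
  have hli : LinearIndependent ℝ (fun a : ι => ⇑(powHom (μ a))) :=
    (linearIndependent_monoidHom Ioc01 ℝ).comp (fun a => powHom (μ a))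
      (powHom_injective.comp hμ)
  funext a
  refine linearIndependent_iff'.mp hli Finset.univ x ?_ a (Finset.mem_univ a)
  funext t
  have := h (t : ℝ) t.2
  simpa [powHom, Finset.sum_apply] using this

lemma cauchy_pd (lam : ι → ℝ) (hpos : ∀ i, 0 < lam i) (hinj : Function.Injective lam)
    (x : ι → ℝ) :
    0 ≤ ∑ a, ∑ d, x a * x d / (lam a + lam d) ∧
      ((∑ a, ∑ d, x a * x d / (lam a + lam d)) = 0 → x = 0) := by
  set μ : ι → ℝ := fun a => lam a - 1/2 with hμdef
  set φ : ℝ → ℝ := fun t => ∑ a, x a * t ^ (μ a) with hφdef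
  have hpt : ∀ t : ℝ, 0 < t → φ t ^ 2 = ∑ a, ∑ d, x a * x d * t ^ (lam a + lam d - 1) := by
    intro t ht
    rw [sq, hφdef, Finset.sum_mul_sum]
    refine Finset.sum_congr rfl fun a _ => Finset.sum_congr rfl fun d _ => ?_
    have : t ^ (lam a + lam d - 1) = t ^ (μ a) * t ^ (μ d) := by
      rw [← Real.rpow_add ht]
      congr 1
      simp [hμdef]; ring
    rw [this]; ring
  have hint : ∀ a d : ι, IntervalIntegrable
      (fun t : ℝ => x a * x d * t ^ (lam a + lam d - 1)) MeasureTheory.volume 0 1 := by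
    intro a d
    exact (intervalIntegral.intervalIntegrable_rpow'
      (by have := hpos a; have := hpos d; linarith)).const_mul _
  have h1 : ∀ a : ι, IntervalIntegrable
      (fun t : ℝ => ∑ d, x a * x d * t ^ (lam a + lam d - 1)) MeasureTheory.volume 0 1 := by
    intro a
    have he : (fun t : ℝ => ∑ d, x a * x d * t ^ (lam a + lam d - 1))
        = ∑ d, (fun t : ℝ => x a * x d * t ^ (lam a + lam d - 1)) := by
      funext t; simp
    rw [he]
    exact IntervalIntegrable.sum _ (fun d _ => hint a d)
  have hintsum : IntervalIntegrable
      (fun t : ℝ => ∑ a, ∑ d, x a * x d * t ^ (lam a + lam d - 1))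
      MeasureTheory.volume 0 1 := by
    have he : (fun t : ℝ => ∑ a, ∑ d, x a * x d * t ^ (lam a + lam d - 1))
        = ∑ a, (fun t : ℝ => ∑ d, x a * x d * t ^ (lam a + lam d - 1)) := by
      funext t; simp
    rw [he]
    exact IntervalIntegrable.sum _ (fun a _ => h1 a)
  have hval : ∫ t in (0:ℝ)..1, (∑ a, ∑ d, x a * x d * t ^ (lam a + lam d - 1))
      = ∑ a, ∑ d, x a * x d / (lam a + lam d) := by
    rw [intervalIntegral.integral_finset_sum (fun a _ => h1 a)]
    refine Finset.sum_congr rfl fun a _ => ?_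
    rw [intervalIntegral.integral_finset_sum (fun d _ => hint a d)]
    refine Finset.sum_congr rfl fun d _ => ?_
    have hne : lam a + lam d ≠ 0 := by have := hpos a; have := hpos d; linarith
    rw [intervalIntegral.integral_const_mul, integral_rpow
      (Or.inl (by have := hpos a; have := hpos d; linarith))]
    rw [Real.one_rpow, Real.zero_rpow
      (by have := hpos a; have := hpos d; intro hcon; linarith : lam a + lam d - 1 + 1 ≠ 0)]
    have he : lam a + lam d - 1 + 1 = lam a + lam d := by ring
    rw [he]
    field_simp
    ring
  have hQint : ∑ a, ∑ d, x a * x d / (lam a + lam d) = ∫ t in (0:ℝ)..1, φ t ^ 2 := by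
    rw [← hval]
    refine (intervalIntegral.integral_congr_ae ?_).symm
    refine MeasureTheory.ae_of_all _ fun t ht => ?_
    rw [Set.uIoc_of_le (zero_le_one)] at ht
    exact hpt t ht.1
  constructor
  · rw [hQint]
    exact intervalIntegral.integral_nonneg zero_le_one (fun u _ => sq_nonneg _)
  · intro hQ0
    rw [hQint] at hQ0
    have hφint : IntervalIntegrable (fun t => φ t ^ 2) MeasureTheory.volume 0 1 := by
      rw [intervalIntegrable_iff, Set.uIoc_of_le zero_le_one]
      have h2 := intervalIntegrable_iff.mp hintsum
      rw [Set.uIoc_of_le zero_le_one] at h2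
      exact h2.congr_fun (fun t ht => (hpt t ht.1).symm) measurableSet_Ioc
    have hφIoo : ∀ t ∈ Set.Ioo (0:ℝ) 1, φ t = 0 := by
      by_contra hcon
      push_neg at hcon
      obtain ⟨t₀, ht₀, hφt₀⟩ := hcon
      have hε : 0 < φ t₀ ^ 2 := by positivity
      have hct : ContinuousAt φ t₀ :=
        tendsto_finset_sum _ (fun a _ =>
          continuousAt_const.mul (Real.continuousAt_rpow_const _ _ (Or.inl ht₀.1.ne')))
      have hev : ∀ᶠ t in nhds t₀, t ∈ Set.Ioo (0:ℝ) 1 ∧ φ t₀ ^ 2 / 2 < φ t ^ 2 := by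
        filter_upwards [Ioo_mem_nhds ht₀.1 ht₀.2,
          (hct.pow 2).eventually (eventually_gt_nhds (show φ t₀ ^ 2 / 2 < φ t₀ ^ 2 from by linarith))] with t h1' h2'
        exact ⟨h1', h2'⟩
      obtain ⟨δ, hδ, hball⟩ := Metric.mem_nhds_iff.mp hev
      set u := t₀ - δ/2 with hu
      set v := t₀ + δ/2 with hv
      have huv : ∀ t ∈ Set.Icc u v, t ∈ Set.Ioo (0:ℝ) 1 ∧ φ t₀ ^ 2 / 2 < φ t ^ 2 := by
        intro t ht
        refine hball ?_
        rw [Metric.mem_ball, Real.dist_eq, abs_sub_lt_iff]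
        constructor <;> [skip; skip] <;>
          · rw [hu, hv] at ht
            rcases ht with ⟨ht1, ht2⟩
            linarith
      have huvle : u ≤ v := by rw [hu, hv]; linarith
      have hu01 : u ∈ Set.Ioo (0:ℝ) 1 := (huv u ⟨le_refl u, huvle⟩).1
      have hv01 : v ∈ Set.Ioo (0:ℝ) 1 := (huv v ⟨huvle, le_refl v⟩).1
      have hi1 : IntervalIntegrable (fun t => φ t ^ 2) MeasureTheory.volume 0 u := by
        refine hφint.mono_set ?_
        rw [Set.uIcc_of_le hu01.1.le, Set.uIcc_of_le zero_le_one]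
        exact Set.Icc_subset_Icc le_rfl hu01.2.le
      have hi2 : IntervalIntegrable (fun t => φ t ^ 2) MeasureTheory.volume u v := by
        refine hφint.mono_set ?_
        rw [Set.uIcc_of_le huvle, Set.uIcc_of_le zero_le_one]
        exact Set.Icc_subset_Icc hu01.1.le hv01.2.le
      have hi3 : IntervalIntegrable (fun t => φ t ^ 2) MeasureTheory.volume v 1 := by
        refine hφint.mono_set ?_
        rw [Set.uIcc_of_le hv01.2.le, Set.uIcc_of_le zero_le_one]
        exact Set.Icc_subset_Icc hv01.1.le le_rfl
      have hsplit : (∫ t in (0:ℝ)..1, φ t ^ 2)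
          = (∫ t in (0:ℝ)..u, φ t ^ 2) + (∫ t in u..v, φ t ^ 2) + (∫ t in v..(1:ℝ), φ t ^ 2) := by
        rw [intervalIntegral.integral_add_adjacent_intervals hi1 hi2,
          intervalIntegral.integral_add_adjacent_intervals (hi1.trans hi2) hi3]
      have hn1 : 0 ≤ ∫ t in (0:ℝ)..u, φ t ^ 2 :=
        intervalIntegral.integral_nonneg hu01.1.le (fun t _ => sq_nonneg _)
      have hn3 : 0 ≤ ∫ t in v..(1:ℝ), φ t ^ 2 :=
        intervalIntegral.integral_nonneg hv01.2.le (fun t _ => sq_nonneg _)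
      have hm : (v - u) * (φ t₀ ^ 2 / 2) ≤ ∫ t in u..v, φ t ^ 2 := by
        have := intervalIntegral.integral_mono_on huvle
          (intervalIntegrable_const (c := φ t₀ ^ 2 / 2)) hi2
          (fun t ht => (huv t ht).2.le)
        rwa [intervalIntegral.integral_const, smul_eq_mul] at this
      have hvu : 0 < v - u := by rw [hu, hv]; linarith
      nlinarith [hm, hn1, hn3, hsplit, hQ0]
    have hφIoc : ∀ t ∈ Set.Ioc (0:ℝ) 1, φ t = 0 := by
      intro t ht
      rcases lt_or_eq_of_le ht.2 with h1 | h1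
      · exact hφIoo t ⟨ht.1, h1⟩
      · subst h1
        have hct : ContinuousAt φ 1 :=
          tendsto_finset_sum _ (fun a _ =>
            continuousAt_const.mul (Real.continuousAt_rpow_const _ _ (Or.inl one_ne_zero)))
        have hne : (nhdsWithin (1:ℝ) (Set.Ioo (0:ℝ) 1)).NeBot :=
          right_nhdsWithin_Ioo_neBot one_pos
        have h2 : Tendsto φ (nhdsWithin (1:ℝ) (Set.Ioo (0:ℝ) 1)) (nhds (φ 1)) :=
          hct.tendsto.mono_left nhdsWithin_le_nhds
        have h3 : Tendsto φ (nhdsWithin (1:ℝ) (Set.Ioo (0:ℝ) 1)) (nhds 0) := by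
          refine tendsto_const_nhds.congr' ?_
          filter_upwards [eventually_mem_nhdsWithin] with s hs
          exact (hφIoo s hs).symm
        exact tendsto_nhds_unique h2 h3
    have hμinj : Function.Injective μ := by
      intro a d h
      refine hinj ?_
      have : lam a - 1/2 = lam d - 1/2 := h
      linarith
    exact powfun_indep hμinj (fun t ht => hφIoc t ht)

lemma mulVec_apply' (kk : ℕ) (A : Matrix (Fin kk) (Fin kk) ℝ) (v : Fin kk → ℝ) (i : Fin kk) :
    A.mulVec v i = ∑ j, A i j * v j := by
  simp [Matrix.mulVec, dotProduct]

lemma system_bijective (lam b : ι → ℝ) (hpos : ∀ i, 0 < lam i)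
    (hinj : Function.Injective lam) (hbne : ∀ i, b i ≠ 0) (M : ℝ) (hM : 0 < M)
    (k : ℕ) (hk : k ≤ Fintype.card ι)
    (A : Matrix (Fin (k+1)) (Fin (k+1)) ℝ)
    (hA : ∀ i j, A i j
      = (∑ a, ∑ d, b a * b d * lam a ^ (i:ℕ) * lam d ^ (j:ℕ) / (lam a + lam d))
        + (if (i:ℕ) = 0 ∧ (j:ℕ) = 0 then 1/(2*M) else 0)) :
    Function.Bijective (fun v => A.mulVec v) := by
  have hker : ∀ v, A.mulVec v = 0 → v = 0 := by
    intro v hv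
    set R : Polynomial ℝ := ∑ j : Fin (k+1), C (v j) * X ^ (j:ℕ) with hRdef
    have hdeg : R.natDegree ≤ k := by
      refine Polynomial.natDegree_sum_le_of_forall_le _ _ (fun j _ => ?_)
      exact le_trans (Polynomial.natDegree_C_mul_X_pow_le _ _)
        (Nat.lt_succ_iff.mp j.isLt)
    have heval : ∀ t : ℝ, R.eval t = ∑ j : Fin (k+1), v j * t ^ (j:ℕ) := by
      intro t
      rw [hRdef, Polynomial.eval_finset_sum]
      simp
    have hcoeff : ∀ j : Fin (k+1), R.coeff (j:ℕ) = v j := by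
      intro j
      rw [hRdef, Polynomial.finset_sum_coeff]
      have hterm : ∀ l : Fin (k+1),
          (C (v l) * X ^ (l:ℕ)).coeff (j:ℕ) = if l = j then v l else 0 := by
        intro l
        rw [Polynomial.coeff_C_mul, Polynomial.coeff_X_pow]
        by_cases h : l = j
        · simp [h]
        · have hne : (j:ℕ) ≠ (l:ℕ) := fun hc => h (Fin.ext hc.symm)
          simp [hne, h]
      rw [Finset.sum_congr rfl (fun l _ => hterm l)]
      simp
    have hrow : ∀ i : Fin (k+1), A.mulVec v i
        = (∑ a, ∑ d, (b a * lam a ^ (i:ℕ)) * (b d * R.eval (lam d)) / (lam a + lam d))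
          + (if (i:ℕ) = 0 then v 0 * (1/(2*M)) else 0) := by
      intro i
      rw [mulVec_apply']
      have hsplit : ∀ j : Fin (k+1), A i j * v j
          = (∑ a, ∑ d, b a * b d * lam a ^ (i:ℕ) * lam d ^ (j:ℕ) / (lam a + lam d)) * v j
            + (if (i:ℕ) = 0 ∧ (j:ℕ) = 0 then 1/(2*M) else 0) * v j := by
        intro j; rw [hA]; ring
      rw [Finset.sum_congr rfl (fun j _ => hsplit j), Finset.sum_add_distrib]
      congr 1
      · have h1 : ∀ j : Fin (k+1),
            (∑ a, ∑ d, b a * b d * lam a ^ (i:ℕ) * lam d ^ (j:ℕ) / (lam a + lam d)) * v j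
            = ∑ a, ∑ d, b a * b d * lam a ^ (i:ℕ) * lam d ^ (j:ℕ) / (lam a + lam d) * v j := by
          intro j
          rw [Finset.sum_mul]
          exact Finset.sum_congr rfl fun a _ => by rw [Finset.sum_mul]
        rw [Finset.sum_congr rfl (fun j _ => h1 j), Finset.sum_comm]
        refine Finset.sum_congr rfl fun a _ => ?_
        rw [Finset.sum_comm]
        refine Finset.sum_congr rfl fun d _ => ?_
        rw [heval (lam d), Finset.mul_sum, Finset.mul_sum, Finset.sum_div]
        exact Finset.sum_congr rfl fun j _ => by ring
      · by_cases hi : (i:ℕ) = 0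
        · simp only [hi, true_and]
          rw [Finset.sum_eq_single (0 : Fin (k+1))]
          · simp [mul_comm]
          · intro j _ hj
            have : ¬((j:ℕ) = 0) := fun hc => hj (Fin.ext hc)
            simp [this]
          · intro h; exact absurd (Finset.mem_univ _) h
        · simp [hi]
    have hzero : ∀ i : Fin (k+1), A.mulVec v i = 0 := fun i => by rw [hv]; rfl
    have hS : (∑ a, ∑ d, (b a * R.eval (lam a)) * (b d * R.eval (lam d)) / (lam a + lam d))
        + v 0 * (v 0 * (1/(2*M))) = 0 := by
      have h0 : ∑ i : Fin (k+1), v i * A.mulVec v i = 0 :=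
        Finset.sum_eq_zero fun i _ => by rw [hzero i, mul_zero]
      have h2 : ∀ i : Fin (k+1),
          v i * (∑ a, ∑ d, (b a * lam a ^ (i:ℕ)) * (b d * R.eval (lam d)) / (lam a + lam d))
          = ∑ a, ∑ d, v i * ((b a * lam a ^ (i:ℕ)) * (b d * R.eval (lam d)) / (lam a + lam d)) := by
        intro i
        rw [Finset.mul_sum]
        exact Finset.sum_congr rfl fun a _ => by rw [Finset.mul_sum]
      have hstep : ∑ i : Fin (k+1), v i * A.mulVec v i
          = (∑ i : Fin (k+1), v i * (∑ a, ∑ d,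
              (b a * lam a ^ (i:ℕ)) * (b d * R.eval (lam d)) / (lam a + lam d)))
            + ∑ i : Fin (k+1), v i * (if (i:ℕ) = 0 then v 0 * (1/(2*M)) else 0) := by
        rw [← Finset.sum_add_distrib]
        exact Finset.sum_congr rfl fun i _ => by rw [hrow i]; ring
      rw [← h0, hstep]
      congr 1
      · refine Eq.symm ?_
        calc ∑ i : Fin (k+1), v i * (∑ a, ∑ d,
                (b a * lam a ^ (i:ℕ)) * (b d * R.eval (lam d)) / (lam a + lam d))
            = ∑ i : Fin (k+1), ∑ a, ∑ d,
                v i * ((b a * lam a ^ (i:ℕ)) * (b d * R.eval (lam d)) / (lam a + lam d)) :=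
              Finset.sum_congr rfl (fun i _ => h2 i)
          _ = ∑ a, ∑ i : Fin (k+1), ∑ d,
                v i * ((b a * lam a ^ (i:ℕ)) * (b d * R.eval (lam d)) / (lam a + lam d)) :=
              Finset.sum_comm
          _ = ∑ a, ∑ d, ∑ i : Fin (k+1),
                v i * ((b a * lam a ^ (i:ℕ)) * (b d * R.eval (lam d)) / (lam a + lam d)) :=
              Finset.sum_congr rfl (fun a _ => Finset.sum_comm)
          _ = ∑ a, ∑ d, (b a * R.eval (lam a)) * (b d * R.eval (lam d)) / (lam a + lam d) := by
              refine Finset.sum_congr rfl fun a _ => Finset.sum_congr rfl fun d _ => ?_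
              calc ∑ i : Fin (k+1),
                    v i * ((b a * lam a ^ (i:ℕ)) * (b d * R.eval (lam d)) / (lam a + lam d))
                  = (∑ i : Fin (k+1), v i * lam a ^ (i:ℕ))
                      * (b a * (b d * R.eval (lam d)) / (lam a + lam d)) := by
                    rw [Finset.sum_mul]
                    exact Finset.sum_congr rfl fun i _ => by ring
                _ = (b a * R.eval (lam a)) * (b d * R.eval (lam d)) / (lam a + lam d) := by
                    rw [← heval (lam a)]; ring
      · refine Eq.symm ?_
        rw [Finset.sum_eq_single (0 : Fin (k+1))]
        · simp
        · intro j _ hj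
          have : ¬((j:ℕ) = 0) := fun hc => hj (Fin.ext hc)
          simp [this]
        · intro h; exact absurd (Finset.mem_univ _) h
    obtain ⟨hnn, hz⟩ := cauchy_pd lam hpos hinj (fun a => b a * R.eval (lam a))
    have hc : (0:ℝ) < 1/(2*M) := by positivity
    have hv0sq : v 0 * (v 0 * (1/(2*M))) = v 0 ^ 2 * (1/(2*M)) := by ring
    have hge : 0 ≤ v 0 * (v 0 * (1/(2*M))) := by
      rw [hv0sq]; exact mul_nonneg (sq_nonneg _) hc.le
    have hSz : (∑ a, ∑ d, (b a * R.eval (lam a)) * (b d * R.eval (lam d)) / (lam a + lam d)) = 0 := by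
      linarith
    have hv0 : v 0 = 0 := by
      have h3 : v 0 ^ 2 * (1/(2*M)) = 0 := by rw [← hv0sq]; linarith
      have h4 : v 0 ^ 2 = 0 := by
        rcases mul_eq_zero.mp h3 with h | h
        · exact h
        · exact absurd h hc.ne'
      exact pow_eq_zero_iff (by norm_num) |>.mp h4
    have hx0 := hz hSz
    have hReval0 : ∀ a : ι, R.eval (lam a) = 0 := by
      intro a
      have := congrFun hx0 a
      simp only [Pi.zero_apply] at this
      rcases mul_eq_zero.mp this with h | h
      · exact absurd h (hbne a)
      · exact h
    have hs0 : (0:ℝ) ∉ Finset.univ.image lam := by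
      simp only [Finset.mem_image]
      rintro ⟨a, -, ha⟩
      exact (hpos a).ne' ha
    have hR0 : R = 0 := by
      refine Polynomial.eq_zero_of_natDegree_lt_card_of_eval_eq_zero' R
        (insert (0:ℝ) (Finset.univ.image lam)) ?_ ?_
      · intro r hr
        rcases Finset.mem_insert.mp hr with h | h
        · subst h
          rw [← Polynomial.coeff_zero_eq_eval_zero]
          have h00 := hcoeff 0
          simp only [Fin.val_zero] at h00
          rw [h00]
          exact hv0
        · obtain ⟨a, _, ha⟩ := Finset.mem_image.mp h
          rw [← ha]; exact hReval0 a
      · rw [Finset.card_insert_of_notMem hs0,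
          Finset.card_image_of_injective _ hinj, Finset.card_univ]
        omega
    funext j
    rw [← hcoeff j, hR0]
    simp
  have hinj2 : Function.Injective (A.mulVecLin) := by
    rw [← LinearMap.ker_eq_bot, LinearMap.ker_eq_bot']
    intro m hm
    exact hker m (by simpa [Matrix.mulVecLin_apply] using hm)
  have hsurj := LinearMap.injective_iff_surjective.mp hinj2
  constructor
  · intro v w h
    exact hinj2 (by simpa [Matrix.mulVecLin_apply] using h)
  · intro y
    obtain ⟨v, hv⟩ := hsurj y
    exact ⟨v, by simpa [Matrix.mulVecLin_apply] using hv⟩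

/-! ### Partial fraction machinery -/

noncomputable def DqP (lam : ι → ℝ) (Q : Polynomial ℝ) (i : ι) : Polynomial ℝ :=
  Q /ₘ (X - C (lam i))

noncomputable def ThatP (lam c : ι → ℝ) (M : ℝ) (Q : Polynomial ℝ) : Polynomial ℝ :=
  C (-(1/(2*M))) * Q.divX + ∑ i, C (c i) * DqP lam Q i

noncomputable def TpP (lam b : ι → ℝ) (Q : Polynomial ℝ) : Polynomial ℝ :=
  ∑ i, C (b i) * DqP lam Q i

lemma Dq_key (lam : ι → ℝ) (Q : Polynomial ℝ) (i : ι) (z : ℝ) :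
    Q.eval z = Q.eval (lam i) + (z - lam i) * (DqP lam Q i).eval z := by
  conv_lhs => rw [← Polynomial.modByMonic_add_div Q (X - C (lam i))]
  rw [Polynomial.modByMonic_X_sub_C_eq_C_eval]
  simp [DqP]

lemma div_split (lam : ι → ℝ) (Q : Polynomial ℝ) (i : ι) {z : ℝ} (hz : z ≠ lam i) :
    Q.eval z / (z - lam i) = (DqP lam Q i).eval z + Q.eval (lam i) / (z - lam i) := by
  have hne : z - lam i ≠ 0 := sub_ne_zero.mpr hz
  rw [Dq_key lam Q i z]
  field_simp
  ring

lemma Dq_eval_zero (lam : ι → ℝ) (Q : Polynomial ℝ) (hQ0 : Q.eval 0 = 0) (i : ι)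
    (hl : lam i ≠ 0) : (DqP lam Q i).eval 0 = Q.eval (lam i) / lam i := by
  have h := Dq_key lam Q i 0
  rw [hQ0] at h
  field_simp
  linarith [h]

lemma divX_key (Q : Polynomial ℝ) (hQ0 : Q.eval 0 = 0) (z : ℝ) :
    Q.eval z = Q.divX.eval z * z := by
  conv_lhs => rw [← Polynomial.divX_mul_X_add Q]
  rw [Polynomial.coeff_zero_eq_eval_zero, hQ0]
  simp

lemma Dq_natDegree_le (lam : ι → ℝ) (Q : Polynomial ℝ) (i : ι) {m : ℕ}
    (hQ : Q.natDegree ≤ m + 1) : (DqP lam Q i).natDegree ≤ m := by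
  rcases eq_or_ne Q 0 with rfl | hQ0
  · simp [DqP]
  · have := Polynomial.natDegree_divByMonic Q (monic_X_sub_C (lam i))
    rw [Polynomial.natDegree_X_sub_C] at this
    rw [DqP, this]
    omega

lemma divX_natDegree_le (Q : Polynomial ℝ) {m : ℕ} (hQ : Q.natDegree ≤ m + 1) :
    Q.divX.natDegree ≤ m := by
  refine Polynomial.natDegree_le_iff_coeff_eq_zero.mpr (fun l hl => ?_)
  rw [Polynomial.coeff_divX]
  exact Polynomial.coeff_eq_zero_of_natDegree_lt (by omega)

lemma That_natDegree_le (lam c : ι → ℝ) (M : ℝ) (Q : Polynomial ℝ) {m : ℕ}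
    (hQ : Q.natDegree ≤ m + 1) : (ThatP lam c M Q).natDegree ≤ m := by
  refine le_trans (Polynomial.natDegree_add_le _ _) (max_le ?_ ?_)
  · exact le_trans (Polynomial.natDegree_C_mul_le _ _) (divX_natDegree_le Q hQ)
  · refine Polynomial.natDegree_sum_le_of_forall_le _ _ (fun i _ => ?_)
    exact le_trans (Polynomial.natDegree_C_mul_le _ _) (Dq_natDegree_le lam Q i hQ)

lemma Tp_natDegree_le (lam b : ι → ℝ) (Q : Polynomial ℝ) {m : ℕ}
    (hQ : Q.natDegree ≤ m + 1) : (TpP lam b Q).natDegree ≤ m := by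
  refine Polynomial.natDegree_sum_le_of_forall_le _ _ (fun i _ => ?_)
  exact le_trans (Polynomial.natDegree_C_mul_le _ _) (Dq_natDegree_le lam Q i hQ)

section Splits
variable (lam b c : ι → ℝ) (M : ℝ)

lemma QZ_split (hM : 0 < M) (Z : ℝ → ℝ)
    (hZ : ∀ z, Z z = -(1 / (2 * M * z)) + ∑ i, c i / (z - lam i))
    (Q : Polynomial ℝ) (hQ0 : Q.eval 0 = 0) (z : ℝ) (hz0 : 0 < z)
    (hzl : ∀ i, lam i < z) :
    Q.eval z * Z z = (ThatP lam c M Q).eval z + ∑ i, c i * Q.eval (lam i) / (z - lam i) := by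
  rw [hZ z]
  rw [ThatP, Polynomial.eval_add, Polynomial.eval_mul, Polynomial.eval_C,
    Polynomial.eval_finset_sum]
  rw [mul_add, Finset.mul_sum, add_assoc, ← Finset.sum_add_distrib]
  congr 1
  · -- -Q z/(2Mz) = -(1/(2M)) * divX.eval z
    rw [divX_key Q hQ0 z]
    have hMz : 2*M*z ≠ 0 := by positivity
    field_simp
  · refine Finset.sum_congr rfl fun i _ => ?_
    rw [Polynomial.eval_mul, Polynomial.eval_C]
    have hne : z - lam i ≠ 0 := sub_ne_zero.mpr (hzl i).ne'
    have h := div_split lam Q i (z := z) (hzl i).ne'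
    calc Q.eval z * (c i / (z - lam i)) = c i * (Q.eval z / (z - lam i)) := by ring
      _ = c i * ((DqP lam Q i).eval z + Q.eval (lam i) / (z - lam i)) := by rw [h]
      _ = c i * (DqP lam Q i).eval z + c i * Q.eval (lam i) / (z - lam i) := by ring

lemma QW_split (W : ℝ → ℝ)
    (hW : ∀ z, W z = ∑ i, b i / (z - lam i))
    (Q : Polynomial ℝ) (z : ℝ) (hzl : ∀ i, lam i < z) :
    Q.eval z * W z = (TpP lam b Q).eval z + ∑ i, b i * Q.eval (lam i) / (z - lam i) := by
  rw [hW z, TpP, Polynomial.eval_finset_sum]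
  rw [Finset.mul_sum, ← Finset.sum_add_distrib]
  refine Finset.sum_congr rfl fun i _ => ?_
  rw [Polynomial.eval_mul, Polynomial.eval_C]
  have h := div_split lam Q i (z := z) (hzl i).ne'
  calc Q.eval z * (b i / (z - lam i)) = b i * (Q.eval z / (z - lam i)) := by ring
    _ = b i * ((DqP lam Q i).eval z + Q.eval (lam i) / (z - lam i)) := by rw [h]
    _ = b i * (DqP lam Q i).eval z + b i * Q.eval (lam i) / (z - lam i) := by ring

lemma Ws_form (hpos : ∀ i, 0 < lam i) (W Ws : ℝ → ℝ)
    (hW : ∀ z, W z = ∑ i, b i / (z - lam i)) (hWs : ∀ z, Ws z = -W (-z))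
    (z : ℝ) (hz0 : 0 < z) : Ws z = ∑ i, b i / (z + lam i) := by
  rw [hWs, hW, ← Finset.sum_neg_distrib]
  refine Finset.sum_congr rfl fun i _ => ?_
  have h1 : -z - lam i ≠ 0 := by have := hpos i; intro hcon; linarith
  have h2 : z + lam i ≠ 0 := by have := hpos i; intro hcon; linarith
  field_simp
  ring

lemma Zs_form (hpos : ∀ i, 0 < lam i) (hM : 0 < M) (Z Zs : ℝ → ℝ)
    (hZ : ∀ z, Z z = -(1 / (2 * M * z)) + ∑ i, c i / (z - lam i))
    (hZs : ∀ z, Zs z = Z (-z))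
    (z : ℝ) (hz0 : 0 < z) : Zs z = 1/(2*M*z) - ∑ i, c i / (z + lam i) := by
  rw [hZs, hZ]
  have he : ∀ i : ι, c i / (-z - lam i) = -(c i / (z + lam i)) := by
    intro i
    have h1 : -z - lam i ≠ 0 := by have := hpos i; intro hcon; linarith
    have h2 : z + lam i ≠ 0 := by have := hpos i; intro hcon; linarith
    field_simp
    ring
  rw [Finset.sum_congr rfl (fun i _ => he i), Finset.sum_neg_distrib]
  have hz : (2*M*z) ≠ 0 := by positivity
  have hz' : (2*M*(-z)) ≠ 0 := by simpa using hz
  field_simp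
  ring

/-- the partial fraction split of a product of two simple fractions -/
lemma frac_prod_split (p q z : ℝ) (hp : p + q ≠ 0) (hzp : z ≠ p) (hzq : z + q ≠ 0)
    (u v : ℝ) :
    (u / (z - p)) * (v / (z + q))
      = (u * v / (p + q)) / (z - p) - (u * v / (p + q)) / (z + q) := by
  have h1 : z - p ≠ 0 := sub_ne_zero.mpr hzp
  field_simp
  ring

lemma prod_split_raw (hpos : ∀ i, 0 < lam i) (f : ι → ℝ) (z : ℝ) (hz0 : 0 < z)
    (hzl : ∀ i, lam i < z) :
    (∑ i, f i / (z - lam i)) * (∑ j, b j / (z + lam j))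
      = (∑ i, (∑ j, f i * b j / (lam i + lam j)) / (z - lam i))
        - ∑ j, (∑ i, f i * b j / (lam i + lam j)) / (z + lam j) := by
  rw [Finset.sum_mul_sum]
  have hterm : ∀ i j : ι, (f i / (z - lam i)) * (b j / (z + lam j))
      = (f i * b j / (lam i + lam j)) / (z - lam i)
        - (f i * b j / (lam i + lam j)) / (z + lam j) := by
    intro i j
    refine frac_prod_split (lam i) (lam j) z ?_ ?_ ?_ (f i) (b j)
    · have := hpos i; have := hpos j; intro hcon; linarith
    · exact (hzl i).ne'
    · have := hpos j; intro hcon; linarith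
  rw [Finset.sum_congr rfl (fun i _ => Finset.sum_congr rfl (fun j _ => hterm i j))]
  rw [Finset.sum_congr rfl (fun i (_ : i ∈ Finset.univ) => Finset.sum_sub_distrib _ _),
    Finset.sum_sub_distrib]
  congr 1
  · exact Finset.sum_congr rfl fun i _ => by rw [Finset.sum_div]
  · rw [Finset.sum_comm]
    exact Finset.sum_congr rfl fun j _ => by rw [Finset.sum_div]

lemma F_formula (hpos : ∀ i, 0 < lam i)
    (hc : ∀ i, c i = -∑ j, b j * b i / (lam j + lam i)) (hM : 0 < M)
    (W Z Ws Zs : ℝ → ℝ)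
    (hW : ∀ z, W z = ∑ i, b i / (z - lam i))
    (hZ : ∀ z, Z z = -(1 / (2 * M * z)) + ∑ i, c i / (z - lam i))
    (hWs : ∀ z, Ws z = -W (-z)) (hZs : ∀ z, Zs z = Z (-z))
    (Q : Polynomial ℝ) (hQ0 : Q.eval 0 = 0) (γ : ℝ)
    (z : ℝ) (hz0 : 0 < z) (hzl : ∀ i, lam i < z) :
    (ThatP lam c M Q).eval z + ((TpP lam b Q).eval z + γ) * Ws z + Q.eval z * Zs z
      = ∑ j, (b j * ((∑ i, b i * Q.eval (lam i) / (lam i + lam j)) + γ)) / (z + lam j) := by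
  have hWsf := Ws_form lam b hpos W Ws hW hWs z hz0
  have hZsf := Zs_form lam c M hpos hM Z Zs hZ hZs z hz0
  have hg := QZ_split lam c M hM Z hZ Q hQ0 z hz0 hzl
  have hh := QW_split lam b W hW Q z hzl
  have hci : ∀ i : ι, (∑ j, b i * b j / (lam i + lam j)) = -c i := by
    intro i
    rw [hc i, neg_neg]
    exact Finset.sum_congr rfl fun j _ => by ring
  have hcj : ∀ j : ι, (∑ i, b i * b j / (lam i + lam j)) = -c j := by
    intro j
    rw [hc j, neg_neg]
  -- W * Ws
  have hWW : W z * Ws z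
      = -(∑ i, c i / (z - lam i)) + (∑ j, c j / (z + lam j)) := by
    rw [hW z, hWsf, prod_split_raw lam b hpos b z hz0 hzl]
    rw [Finset.sum_congr rfl (fun i (_ : i ∈ Finset.univ) => by rw [hci i] :
      ∀ i ∈ Finset.univ, (∑ j, b i * b j / (lam i + lam j)) / (z - lam i)
        = -c i / (z - lam i))]
    rw [Finset.sum_congr rfl (fun j (_ : j ∈ Finset.univ) => by rw [hcj j] :
      ∀ j ∈ Finset.univ, (∑ i, b i * b j / (lam i + lam j)) / (z + lam j)
        = -c j / (z + lam j))]
    rw [show (∑ i, -c i / (z - lam i)) = -(∑ i, c i / (z - lam i)) by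
      rw [← Finset.sum_neg_distrib]; exact Finset.sum_congr rfl fun i _ => by ring]
    rw [show (∑ j, -c j / (z + lam j)) = -(∑ j, c j / (z + lam j)) by
      rw [← Finset.sum_neg_distrib]; exact Finset.sum_congr rfl fun j _ => by ring]
    ring
  -- Zs = -Z - W·Ws
  have hZZ : Zs z = -Z z - W z * Ws z := by
    rw [hZsf, hWW, hZ z]
    have hMz : 2*M*z ≠ 0 := by positivity
    ring
  -- h · Ws
  have hHW : (∑ i, b i * Q.eval (lam i) / (z - lam i)) * Ws z
      = -(∑ i, c i * Q.eval (lam i) / (z - lam i))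
        - ∑ j, (b j * (∑ i, b i * Q.eval (lam i) / (lam i + lam j))) / (z + lam j) := by
    rw [hWsf, prod_split_raw lam b hpos (fun i => b i * Q.eval (lam i)) z hz0 hzl]
    have hin1 : ∀ i : ι, (∑ j, (b i * Q.eval (lam i)) * b j / (lam i + lam j))
        = Q.eval (lam i) * (-c i) := by
      intro i
      rw [← hci i, Finset.mul_sum]
      exact Finset.sum_congr rfl fun j _ => by ring
    have hin2 : ∀ j : ι, (∑ i, (b i * Q.eval (lam i)) * b j / (lam i + lam j))
        = b j * (∑ i, b i * Q.eval (lam i) / (lam i + lam j)) := by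
      intro j
      rw [Finset.mul_sum]
      exact Finset.sum_congr rfl fun i _ => by ring
    rw [Finset.sum_congr rfl (fun i (_ : i ∈ Finset.univ) => by rw [hin1 i] :
      ∀ i ∈ Finset.univ, (∑ j, (b i * Q.eval (lam i)) * b j / (lam i + lam j)) / (z - lam i)
        = Q.eval (lam i) * (-c i) / (z - lam i))]
    rw [Finset.sum_congr rfl (fun j (_ : j ∈ Finset.univ) => by rw [hin2 j] :
      ∀ j ∈ Finset.univ, (∑ i, (b i * Q.eval (lam i)) * b j / (lam i + lam j)) / (z + lam j)
        = (b j * (∑ i, b i * Q.eval (lam i) / (lam i + lam j))) / (z + lam j))]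
    rw [show (∑ i, Q.eval (lam i) * (-c i) / (z - lam i))
        = -(∑ i, c i * Q.eval (lam i) / (z - lam i)) by
      rw [← Finset.sum_neg_distrib]; exact Finset.sum_congr rfl fun i _ => by ring]
  -- assemble
  have key : (ThatP lam c M Q).eval z + ((TpP lam b Q).eval z + γ) * Ws z + Q.eval z * Zs z
      = γ * Ws z + (∑ j, (b j * (∑ i, b i * Q.eval (lam i) / (lam i + lam j))) / (z + lam j)) := by
    rw [hZZ]
    have e1 : Q.eval z * (-Z z - W z * Ws z)
        = -(Q.eval z * Z z) - (Q.eval z * W z) * Ws z := by ring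
    rw [e1, hg, hh]
    rw [show ((TpP lam b Q).eval z + ∑ i, b i * Q.eval (lam i) / (z - lam i)) * Ws z
        = (TpP lam b Q).eval z * Ws z
          + (∑ i, b i * Q.eval (lam i) / (z - lam i)) * Ws z by ring]
    rw [hHW]
    ring
  rw [key, hWsf, Finset.mul_sum, ← Finset.sum_add_distrib]
  exact Finset.sum_congr rfl fun j _ => by ring

lemma SW (i : ℕ) {k : ℕ} (R : Polynomial ℝ) (hR : R.natDegree < k+1) :
    ∑ j : Fin (k+1),
        (∑ a, ∑ d, b a * b d * lam a ^ i * lam d ^ (j:ℕ) / (lam a + lam d)) * R.coeff (j:ℕ)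
      = ∑ a, ∑ d, (b a * lam a ^ i) * (b d * R.eval (lam d)) / (lam a + lam d) := by
  have heval : ∀ t : ℝ, R.eval t = ∑ j : Fin (k+1), R.coeff (j:ℕ) * t ^ (j:ℕ) := by
    intro t
    rw [Polynomial.eval_eq_sum_range' hR,
      ← Fin.sum_univ_eq_sum_range (fun j => R.coeff j * t ^ j) (k+1)]
  have h1 : ∀ j : Fin (k+1),
      (∑ a, ∑ d, b a * b d * lam a ^ i * lam d ^ (j:ℕ) / (lam a + lam d)) * R.coeff (j:ℕ)
      = ∑ a, ∑ d, b a * b d * lam a ^ i * lam d ^ (j:ℕ) / (lam a + lam d) * R.coeff (j:ℕ) := by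
    intro j
    rw [Finset.sum_mul]
    exact Finset.sum_congr rfl fun a _ => by rw [Finset.sum_mul]
  rw [Finset.sum_congr rfl (fun j _ => h1 j), Finset.sum_comm]
  refine Finset.sum_congr rfl fun a _ => ?_
  rw [Finset.sum_comm]
  refine Finset.sum_congr rfl fun d _ => ?_
  rw [heval (lam d), Finset.mul_sum, Finset.mul_sum, Finset.sum_div]
  exact Finset.sum_congr rfl fun j _ => by ring

lemma beta_gamma (hpos : ∀ i, 0 < lam i) (Q : Polynomial ℝ)
    (hQ0 : Q.eval 0 = 0) (j : ι) :
    (∑ i, b i * Q.eval (lam i) / (lam i + lam j)) + -(TpP lam b Q).eval 0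
      = -(lam j * (∑ a, b a * Q.divX.eval (lam a) / (lam a + lam j))) := by
  have hTp0 : (TpP lam b Q).eval 0 = ∑ i, b i * (Q.eval (lam i) / lam i) := by
    rw [TpP, Polynomial.eval_finset_sum]
    refine Finset.sum_congr rfl fun i _ => ?_
    rw [Polynomial.eval_mul, Polynomial.eval_C, Dq_eval_zero lam Q hQ0 i (hpos i).ne']
  rw [hTp0]
  rw [show -(lam j * (∑ a, b a * Q.divX.eval (lam a) / (lam a + lam j)))
      = ∑ a, -(lam j * (b a * Q.divX.eval (lam a) / (lam a + lam j))) by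
    rw [Finset.mul_sum, ← Finset.sum_neg_distrib]]
  rw [← sub_eq_add_neg, ← Finset.sum_sub_distrib]
  refine Finset.sum_congr rfl fun i _ => ?_
  have hQl : Q.eval (lam i) = Q.divX.eval (lam i) * lam i := divX_key Q hQ0 (lam i)
  have h1 : lam i ≠ 0 := (hpos i).ne'
  have h2 : lam i + lam j ≠ 0 := by have := hpos i; have := hpos j; intro hcon; linarith
  rw [hQl]
  field_simp
  ring

lemma row0 (hpos : ∀ i, 0 < lam i)
    (hc : ∀ i, c i = -∑ j, b j * b i / (lam j + lam i)) (hM : 0 < M) (k : ℕ)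
    (Q : Polynomial ℝ) (hQ0 : Q.eval 0 = 0) (hQdeg : Q.natDegree ≤ k + 1) :
    ∑ j : Fin (k+1),
        ((∑ a, ∑ d, b a * b d * lam a ^ (0:ℕ) * lam d ^ (j:ℕ) / (lam a + lam d))
          + if (j:ℕ) = 0 then 1 / (2 * M) else 0) * Q.coeff ((j:ℕ) + 1)
      = -((ThatP lam c M Q).eval 0) := by
  have hRdeg : Q.divX.natDegree < k + 1 := Nat.lt_succ_of_le (divX_natDegree_le Q hQdeg)
  have hcoe : ∀ j : Fin (k+1), Q.coeff ((j:ℕ)+1) = Q.divX.coeff (j:ℕ) := fun j =>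
    (Polynomial.coeff_divX).symm
  have hsplit : ∀ j : Fin (k+1),
      ((∑ a, ∑ d, b a * b d * lam a ^ (0:ℕ) * lam d ^ (j:ℕ) / (lam a + lam d))
          + if (j:ℕ) = 0 then 1 / (2 * M) else 0) * Q.coeff ((j:ℕ) + 1)
      = (∑ a, ∑ d, b a * b d * lam a ^ (0:ℕ) * lam d ^ (j:ℕ) / (lam a + lam d))
          * Q.divX.coeff (j:ℕ)
        + (if (j:ℕ) = 0 then 1 / (2 * M) else 0) * Q.coeff ((j:ℕ) + 1) := by
    intro j
    rw [hcoe j]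
    ring
  rw [Finset.sum_congr rfl (fun j _ => hsplit j), Finset.sum_add_distrib,
    SW lam b 0 Q.divX hRdeg]
  have hifsum : ∑ j : Fin (k+1), (if (j:ℕ) = 0 then 1 / (2 * M) else 0) * Q.coeff ((j:ℕ) + 1)
      = 1/(2*M) * Q.coeff 1 := by
    rw [Finset.sum_eq_single (0 : Fin (k+1))]
    · simp
    · intro j _ hj
      have : ¬((j:ℕ) = 0) := fun hcon => hj (Fin.ext hcon)
      simp [this]
    · intro h; exact absurd (Finset.mem_univ _) h
  rw [hifsum]
  have hThat0 : (ThatP lam c M Q).eval 0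
      = -(1/(2*M)) * Q.coeff 1 + ∑ i, c i * (Q.eval (lam i) / lam i) := by
    rw [ThatP, Polynomial.eval_add, Polynomial.eval_mul, Polynomial.eval_C,
      Polynomial.eval_finset_sum]
    congr 1
    · rw [← Polynomial.coeff_zero_eq_eval_zero, Polynomial.coeff_divX]
    · refine Finset.sum_congr rfl fun i _ => ?_
      rw [Polynomial.eval_mul, Polynomial.eval_C, Dq_eval_zero lam Q hQ0 i (hpos i).ne']
  rw [hThat0]
  have hmain : ∑ a, ∑ d, (b a * lam a ^ (0:ℕ)) * (b d * Q.divX.eval (lam d)) / (lam a + lam d)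
      = -(∑ d, c d * (Q.eval (lam d) / lam d)) := by
    rw [Finset.sum_comm, ← Finset.sum_neg_distrib]
    refine Finset.sum_congr rfl fun d _ => ?_
    have hRl : Q.eval (lam d) = Q.divX.eval (lam d) * lam d := divX_key Q hQ0 (lam d)
    have hld : lam d ≠ 0 := (hpos d).ne'
    calc ∑ a, (b a * lam a ^ (0:ℕ)) * (b d * Q.divX.eval (lam d)) / (lam a + lam d)
        = (∑ a, b a * b d / (lam a + lam d)) * Q.divX.eval (lam d) := by
          rw [Finset.sum_mul]
          exact Finset.sum_congr rfl fun a _ => by ring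
      _ = (-c d) * Q.divX.eval (lam d) := by
          congr 1
          rw [hc d, neg_neg]
      _ = -(c d * (Q.eval (lam d) / lam d)) := by
          rw [hRl]
          field_simp
  rw [hmain]
  ring

lemma rowpos (hpos : ∀ i, 0 < lam i) (m : ℕ) {k : ℕ}
    (Q : Polynomial ℝ) (hQ0 : Q.eval 0 = 0) (hQdeg : Q.natDegree ≤ k + 1) :
    ∑ j : Fin (k+1),
        (∑ a, ∑ d, b a * b d * lam a ^ (m+1) * lam d ^ (j:ℕ) / (lam a + lam d))
          * Q.coeff ((j:ℕ) + 1)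
      = -(∑ l, (b l * ((∑ a, b a * Q.eval (lam a) / (lam a + lam l))
          + -(TpP lam b Q).eval 0)) * lam l ^ m) := by
  have hRdeg : Q.divX.natDegree < k + 1 := Nat.lt_succ_of_le (divX_natDegree_le Q hQdeg)
  have hcoe : ∀ j : Fin (k+1), Q.coeff ((j:ℕ)+1) = Q.divX.coeff (j:ℕ) := fun j =>
    (Polynomial.coeff_divX).symm
  have hstep : ∑ j : Fin (k+1),
        (∑ a, ∑ d, b a * b d * lam a ^ (m+1) * lam d ^ (j:ℕ) / (lam a + lam d))
          * Q.coeff ((j:ℕ) + 1)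
      = ∑ j : Fin (k+1),
        (∑ a, ∑ d, b a * b d * lam a ^ (m+1) * lam d ^ (j:ℕ) / (lam a + lam d))
          * Q.divX.coeff (j:ℕ) :=
    Finset.sum_congr rfl fun j _ => by rw [hcoe j]
  rw [hstep, SW lam b (m+1) Q.divX hRdeg]
  have hRHS : -(∑ l, (b l * ((∑ a, b a * Q.eval (lam a) / (lam a + lam l))
        + -(TpP lam b Q).eval 0)) * lam l ^ m)
      = ∑ l, ∑ a, (b l * lam l ^ (m+1)) * (b a * Q.divX.eval (lam a)) / (lam a + lam l) := by
    rw [← Finset.sum_neg_distrib]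
    refine Finset.sum_congr rfl fun l _ => ?_
    rw [beta_gamma lam b hpos Q hQ0 l]
    calc -(b l * -(lam l * (∑ a, b a * Q.divX.eval (lam a) / (lam a + lam l))) * lam l ^ m)
        = (b l * lam l ^ (m+1)) * (∑ a, b a * Q.divX.eval (lam a) / (lam a + lam l)) := by
          ring
      _ = ∑ a, (b l * lam l ^ (m+1)) * (b a * Q.divX.eval (lam a)) / (lam a + lam l) := by
          rw [Finset.mul_sum]
          exact Finset.sum_congr rfl fun a _ => by ring
  rw [hRHS]
  refine Finset.sum_congr rfl fun a _ => Finset.sum_congr rfl fun d _ => ?_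
  ring

lemma fracsum_isBigO (e w : ι → ℝ) :
    (fun z => ∑ i, e i / (z - w i)) =O[atTop] (fun z : ℝ => z⁻¹) := by
  refine Asymptotics.IsBigO.fun_sum fun i _ => ?_
  have he : (fun z : ℝ => e i / (z - w i)) = fun z => e i * (z + -(w i))⁻¹ := by
    funext z; rw [div_eq_mul_inv, sub_eq_add_neg]
  rw [he]
  exact (isBigO_inv_add (-(w i))).const_mul_left (e i)

lemma inv_isBigO_one : (fun z : ℝ => z⁻¹) =O[atTop] (fun _ : ℝ => (1:ℝ)) := by
  rw [isBigO_iff]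
  refine ⟨1, ?_⟩
  filter_upwards [eventually_ge_atTop (1:ℝ)] with z hz
  rw [norm_inv, Real.norm_eq_abs, Real.norm_eq_abs, abs_of_pos (by linarith : (0:ℝ) < z),
    abs_one, one_mul]
  exact inv_le_one_of_one_le₀ hz

lemma forward_core (hpos : ∀ i, 0 < lam i)
    (hc : ∀ i, c i = -∑ j, b j * b i / (lam j + lam i)) (hM : 0 < M) (k : ℕ)
    (W Z Ws Zs : ℝ → ℝ)
    (hW : ∀ z, W z = ∑ i, b i / (z - lam i))
    (hZ : ∀ z, Z z = -(1 / (2 * M * z)) + ∑ i, c i / (z - lam i))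
    (hWs : ∀ z, Ws z = -W (-z)) (hZs : ∀ z, Zs z = Z (-z))
    (Q P Phat : Polynomial ℝ)
    (hQ0 : Q.eval 0 = 0) (hP0 : P.eval 0 = 0)
    (hO1 : (fun z => Q.eval z * Z z - Phat.eval z) =O[atTop] fun z : ℝ => z⁻¹)
    (hO2 : (fun z => Q.eval z * W z - P.eval z) =O[atTop] fun _ : ℝ => (1:ℝ))
    (hO3 : (fun z => Phat.eval z + P.eval z * Ws z + Q.eval z * Zs z)
      =O[atTop] fun z : ℝ => (z ^ (k+1))⁻¹) :
    Phat = ThatP lam c M Q ∧ P = TpP lam b Q + C (-(TpP lam b Q).eval 0) ∧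
      (∀ m : ℕ, m < k →
        ∑ l, (b l * ((∑ a, b a * Q.eval (lam a) / (lam a + lam l))
          + -(TpP lam b Q).eval 0)) * lam l ^ m = 0) := by
  have hev : ∀ᶠ z : ℝ in atTop, 0 < z ∧ ∀ i, lam i < z := by
    filter_upwards [eventually_gt_atTop (0:ℝ),
      eventually_all.mpr (fun i => eventually_gt_atTop (lam i))] with z h1 h2
    exact ⟨h1, h2⟩
  have hgO := fracsum_isBigO (fun i => c i * Q.eval (lam i)) lam
  have hPhat : Phat = ThatP lam c M Q := by
    have hdiff : (fun z => (Phat - ThatP lam c M Q).eval z) =O[atTop] (fun z : ℝ => z⁻¹) := by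
      have h1 : (fun z => -(Q.eval z * Z z - Phat.eval z)
          + (∑ i, c i * Q.eval (lam i) / (z - lam i))) =O[atTop] (fun z : ℝ => z⁻¹) :=
        hO1.neg_left.add hgO
      refine h1.congr' ?_ (EventuallyEq.refl _ _)
      filter_upwards [hev] with z hz
      rw [Polynomial.eval_sub, QZ_split lam c M hM Z hZ Q hQ0 z hz.1 hz.2]
      ring
    exact sub_eq_zero.mp (poly_zero_of_isBigO_inv hdiff)
  have hP : P = TpP lam b Q + C (-(TpP lam b Q).eval 0) := by
    have hhO := fracsum_isBigO (fun i => b i * Q.eval (lam i)) lam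
    have hdiff : (fun z => (P - TpP lam b Q).eval z) =O[atTop] (fun _ : ℝ => (1:ℝ)) := by
      have h1 : (fun z => -(Q.eval z * W z - P.eval z)
          + (∑ i, b i * Q.eval (lam i) / (z - lam i))) =O[atTop] (fun _ : ℝ => (1:ℝ)) :=
        hO2.neg_left.add (hhO.trans inv_isBigO_one)
      refine h1.congr' ?_ (EventuallyEq.refl _ _)
      filter_upwards [hev] with z hz
      rw [Polynomial.eval_sub, QW_split lam b W hW Q z hz.2]
      ring
    have hconst := poly_const_of_isBigO_one hdiff
    have hc0 : (P - TpP lam b Q).coeff 0 = -(TpP lam b Q).eval 0 := by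
      rw [Polynomial.coeff_zero_eq_eval_zero, Polynomial.eval_sub, hP0]
      ring
    rw [hc0] at hconst
    have := sub_eq_iff_eq_add.mp hconst
    rw [this]
    ring
  refine ⟨hPhat, hP, ?_⟩
  have hFf : ∀ᶠ z : ℝ in atTop,
      Phat.eval z + P.eval z * Ws z + Q.eval z * Zs z
        = ∑ j, (b j * ((∑ i, b i * Q.eval (lam i) / (lam i + lam j))
            + -(TpP lam b Q).eval 0)) / (z + lam j) := by
    filter_upwards [hev] with z hz
    rw [hPhat, hP, Polynomial.eval_add, Polynomial.eval_C]
    exact F_formula lam b c M hpos hc hM W Z Ws Zs hW hZ hWs hZs Q hQ0 _ z hz.1 hz.2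
  have hFO : (fun z => ∑ j, (b j * ((∑ i, b i * Q.eval (lam i) / (lam i + lam j))
      + -(TpP lam b Q).eval 0)) / (z + lam j)) =O[atTop] (fun z : ℝ => (z^(k+1))⁻¹) :=
    hO3.congr' hFf (EventuallyEq.refl _ _)
  exact moments_vanish lam hpos _ k hFO

lemma exists_core (hpos : ∀ i, 0 < lam i)
    (hc : ∀ i, c i = -∑ j, b j * b i / (lam j + lam i)) (hM : 0 < M) (k : ℕ)
    (W Z Ws Zs : ℝ → ℝ)
    (hW : ∀ z, W z = ∑ i, b i / (z - lam i))
    (hZ : ∀ z, Z z = -(1 / (2 * M * z)) + ∑ i, c i / (z - lam i))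
    (hWs : ∀ z, Ws z = -W (-z)) (hZs : ∀ z, Zs z = Z (-z))
    (v : Fin (k+1) → ℝ)
    (hv0 : ∑ j : Fin (k+1),
      ((∑ a, ∑ d, b a * b d * lam a ^ (0:ℕ) * lam d ^ (j:ℕ) / (lam a + lam d))
        + if (j:ℕ) = 0 then 1 / (2 * M) else 0) * v j = -1)
    (hvpos : ∀ m : ℕ, m < k → ∑ j : Fin (k+1),
      (∑ a, ∑ d, b a * b d * lam a ^ (m+1) * lam d ^ (j:ℕ) / (lam a + lam d)) * v j = 0) :
    ∃ Q P Phat : Polynomial ℝ,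
      Q.natDegree ≤ k + 1 ∧ P.natDegree ≤ k ∧ Phat.natDegree ≤ k ∧
      Q.eval 0 = 0 ∧ P.eval 0 = 0 ∧ Phat.eval 0 = 1 ∧
      ((fun z => Q.eval z * Z z - Phat.eval z) =O[atTop] fun z : ℝ => z⁻¹) ∧
      ((fun z => Q.eval z * W z - P.eval z) =O[atTop] fun _ : ℝ => (1:ℝ)) ∧
      ((fun z => Phat.eval z + P.eval z * Ws z + Q.eval z * Zs z)
        =O[atTop] fun z : ℝ => (z ^ (k+1))⁻¹) ∧
      (∀ j : Fin (k+1), Q.coeff ((j:ℕ)+1) = v j) := by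
  have hev : ∀ᶠ z : ℝ in atTop, 0 < z ∧ ∀ i, lam i < z := by
    filter_upwards [eventually_gt_atTop (0:ℝ),
      eventually_all.mpr (fun i => eventually_gt_atTop (lam i))] with z h1 h2
    exact ⟨h1, h2⟩
  set Q : Polynomial ℝ := ∑ j : Fin (k+1), C (v j) * X ^ ((j:ℕ)+1) with hQdef
  have hQ0 : Q.eval 0 = 0 := by
    rw [hQdef, Polynomial.eval_finset_sum]
    refine Finset.sum_eq_zero fun j _ => ?_
    simp
  have hQdeg : Q.natDegree ≤ k + 1 := by
    refine Polynomial.natDegree_sum_le_of_forall_le _ _ (fun j _ => ?_)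
    exact le_trans (Polynomial.natDegree_C_mul_X_pow_le _ _) (by omega)
  have hQcoeff : ∀ j : Fin (k+1), Q.coeff ((j:ℕ)+1) = v j := by
    intro j
    rw [hQdef, Polynomial.finset_sum_coeff]
    have hterm : ∀ l : Fin (k+1),
        (C (v l) * X ^ ((l:ℕ)+1)).coeff ((j:ℕ)+1) = if l = j then v l else 0 := by
      intro l
      rw [Polynomial.coeff_C_mul, Polynomial.coeff_X_pow]
      by_cases h : l = j
      · simp [h]
      · have hne : ¬((j:ℕ)+1 = (l:ℕ)+1) := fun hcon => h (Fin.ext (by omega))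
        simp [hne, h]
        intro hjl; exact absurd (Fin.ext hjl.symm) h
    rw [Finset.sum_congr rfl (fun l _ => hterm l)]
    simp
  set Phat : Polynomial ℝ := ThatP lam c M Q with hPhdef
  set P : Polynomial ℝ := TpP lam b Q + C (-(TpP lam b Q).eval 0) with hPdef
  -- row0 gives Phat.eval 0 = 1
  have hr0 := row0 lam b c M hpos hc hM k Q hQ0 hQdeg
  rw [Finset.sum_congr rfl (fun (j : Fin (k+1)) _ => by rw [hQcoeff j])] at hr0
  rw [hv0] at hr0
  have hPh1 : Phat.eval 0 = 1 := by rw [hPhdef]; linarith [hr0]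
  -- moments vanish
  have hmom : ∀ m : ℕ, m < k →
      ∑ l, (b l * ((∑ a, b a * Q.eval (lam a) / (lam a + lam l))
        + -(TpP lam b Q).eval 0)) * lam l ^ m = 0 := by
    intro m hm
    have hrp := rowpos lam b hpos m Q hQ0 hQdeg
    rw [Finset.sum_congr rfl (fun (j : Fin (k+1)) _ => by rw [hQcoeff j])] at hrp
    rw [hvpos m hm] at hrp
    linarith [hrp]
  -- O1
  have hgO := fracsum_isBigO (fun i => c i * Q.eval (lam i)) lam
  have he1 : (fun z => Q.eval z * Z z - Phat.eval z)
      =ᶠ[atTop] (fun z => ∑ i, c i * Q.eval (lam i) / (z - lam i)) := by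
    filter_upwards [hev] with z hz
    rw [hPhdef, QZ_split lam c M hM Z hZ Q hQ0 z hz.1 hz.2]
    ring
  have hO1 : (fun z => Q.eval z * Z z - Phat.eval z) =O[atTop] fun z : ℝ => z⁻¹ :=
    hgO.congr' he1.symm (EventuallyEq.refl _ _)
  -- O2
  have hhO := fracsum_isBigO (fun i => b i * Q.eval (lam i)) lam
  have he2 : (fun z => Q.eval z * W z - P.eval z)
      =ᶠ[atTop] (fun z => (∑ i, b i * Q.eval (lam i) / (z - lam i)) + (TpP lam b Q).eval 0) := by
    filter_upwards [hev] with z hz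
    rw [hPdef, Polynomial.eval_add, Polynomial.eval_C, QW_split lam b W hW Q z hz.2]
    ring
  have hO2 : (fun z => Q.eval z * W z - P.eval z) =O[atTop] fun _ : ℝ => (1:ℝ) := by
    refine IsBigO.congr' ?_ he2.symm (EventuallyEq.refl _ _)
    exact (hhO.trans inv_isBigO_one).add (isBigO_const_const _ one_ne_zero _)
  -- O3
  have hFf : (fun z => Phat.eval z + P.eval z * Ws z + Q.eval z * Zs z)
      =ᶠ[atTop] (fun z => ∑ j, (b j * ((∑ i, b i * Q.eval (lam i) / (lam i + lam j))
          + -(TpP lam b Q).eval 0)) / (z + lam j)) := by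
    filter_upwards [hev] with z hz
    rw [hPhdef, hPdef, Polynomial.eval_add, Polynomial.eval_C]
    exact F_formula lam b c M hpos hc hM W Z Ws Zs hW hZ hWs hZs Q hQ0 _ z hz.1 hz.2
  have hO3 : (fun z => Phat.eval z + P.eval z * Ws z + Q.eval z * Zs z)
      =O[atTop] fun z : ℝ => (z ^ (k+1))⁻¹ := by
    refine IsBigO.congr' ?_ hFf.symm (EventuallyEq.refl _ _)
    exact isBigO_of_moments lam hpos _ k hmom
  refine ⟨Q, P, Phat, hQdeg, ?_, ?_, hQ0, ?_, hPh1, hO1, hO2, hO3, hQcoeff⟩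
  · rw [hPdef]
    refine le_trans (Polynomial.natDegree_add_le _ _) (max_le (Tp_natDegree_le lam b Q hQdeg) ?_)
    simp [Polynomial.natDegree_C]
  · rw [hPhdef]
    exact That_natDegree_le lam c M Q hQdeg
  · rw [hPdef, Polynomial.eval_add, Polynomial.eval_C]
    ring

end Splits

end Stmt16Aux

/-- **The Type I simultaneous rational approximation problem.**
Given spectral data `0 < λ_1 < ⋯ < λ_{n−1}`, `b_i < 0`, `M > 0`, with
`c_i = −Σ_j b_j b_i/(λ_j + λ_i)`, `W(z) = Σ b_i/(z − λ_i)`,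
`Z(z) = −1/(2Mz) + Σ c_i/(z − λ_i)`, `W*(z) = −W(−z)`, `Z*(z) = Z(−z)`:
for fixed `0 ≤ k ≤ n−1` there are unique polynomials `Q, P, P̂` of degrees
`≤ k+1, k, k` with `Q(0) = 0`, `P(0) = 0`, `P̂(0) = 1` such that `QZ − P̂ = O(z⁻¹)`,
`QW − P = O(1)` and `P̂ + P W* + Q Z* = O(z^{−(k+1)})` as `z → ∞`; moreover the
coefficients `q_j = Q.coeff j` satisfy the `(k+1)×(k+1)` system whose first
equation is `(I_{00} + 1/(2M)) q_1 + Σ_{j=2}^{k+1} I_{0,j−1} q_j = −1` and whose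
remaining equations are `Σ_{j=1}^{k+1} I_{i,j−1} q_j = 0` for `i = 1, …, k`,
where `I_{ij} = Σ_{a,d} b_a b_d λ_a^i λ_d^j/(λ_a + λ_d)`. -/
theorem stmt16 (n : ℕ) (hn : 2 ≤ n) (lam b : Fin (n - 1) → ℝ)
    (hmono : StrictMono lam) (hpos : ∀ i, 0 < lam i) (hb : ∀ i, b i < 0)
    (M : ℝ) (hM : 0 < M) (k : ℕ) (hk : k ≤ n - 1)
    (c : Fin (n - 1) → ℝ)
    (hc : ∀ i, c i = -∑ j, b j * b i / (lam j + lam i))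
    (W Z Ws Zs : ℝ → ℝ)
    (hW : ∀ z, W z = ∑ i, b i / (z - lam i))
    (hZ : ∀ z, Z z = -(1 / (2 * M * z)) + ∑ i, c i / (z - lam i))
    (hWs : ∀ z, Ws z = -W (-z)) (hZs : ∀ z, Zs z = Z (-z))
    (I : ℕ → ℕ → ℝ)
    (hI : ∀ i j, I i j = ∑ a, ∑ d, b a * b d * lam a ^ i * lam d ^ j / (lam a + lam d)) :
    (∃! QPP : Polynomial ℝ × Polynomial ℝ × Polynomial ℝ,
      QPP.1.natDegree ≤ k + 1 ∧ QPP.2.1.natDegree ≤ k ∧ QPP.2.2.natDegree ≤ k ∧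
      QPP.1.eval 0 = 0 ∧ QPP.2.1.eval 0 = 0 ∧ QPP.2.2.eval 0 = 1 ∧
      (fun z => QPP.1.eval z * Z z - QPP.2.2.eval z) =O[atTop] (fun z : ℝ => z⁻¹) ∧
      (fun z => QPP.1.eval z * W z - QPP.2.1.eval z) =O[atTop] (fun _ : ℝ => (1 : ℝ)) ∧
      (fun z => QPP.2.2.eval z + QPP.2.1.eval z * Ws z + QPP.1.eval z * Zs z)
        =O[atTop] (fun z : ℝ => (z ^ (k + 1))⁻¹)) ∧
    (∀ Q P Phat : Polynomial ℝ,
      Q.natDegree ≤ k + 1 → P.natDegree ≤ k → Phat.natDegree ≤ k →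
      Q.eval 0 = 0 → P.eval 0 = 0 → Phat.eval 0 = 1 →
      (fun z => Q.eval z * Z z - Phat.eval z) =O[atTop] (fun z : ℝ => z⁻¹) →
      (fun z => Q.eval z * W z - P.eval z) =O[atTop] (fun _ : ℝ => (1 : ℝ)) →
      (fun z => Phat.eval z + P.eval z * Ws z + Q.eval z * Zs z)
        =O[atTop] (fun z : ℝ => (z ^ (k + 1))⁻¹) →
      ∀ i : Fin (k + 1),
        ∑ j : Fin (k + 1),
          (I (i : ℕ) (j : ℕ) + if (i : ℕ) = 0 ∧ (j : ℕ) = 0 then 1 / (2 * M) else 0)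
            * Q.coeff ((j : ℕ) + 1)
          = if (i : ℕ) = 0 then -1 else 0) := by
  classical
  have hinj : Function.Injective lam := hmono.injective
  have hbne : ∀ i, b i ≠ 0 := fun i => (hb i).ne
  set A : Matrix (Fin (k+1)) (Fin (k+1)) ℝ := fun i j =>
    (∑ a, ∑ d, b a * b d * lam a ^ (i:ℕ) * lam d ^ (j:ℕ) / (lam a + lam d))
      + (if (i:ℕ) = 0 ∧ (j:ℕ) = 0 then 1/(2*M) else 0) with hAdef
  have hbij := Stmt16Aux.system_bijective lam b hpos hinj hbne M hM k
    (by rw [Fintype.card_fin]; exact hk) A (fun i j => rfl)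
  obtain ⟨v, hv⟩ := hbij.2 (fun i => if (i:ℕ) = 0 then (-1:ℝ) else 0)
  have hvrows : ∀ i : Fin (k+1), ∑ j, A i j * v j = (if (i:ℕ) = 0 then (-1:ℝ) else 0) :=
    fun i => by rw [← Stmt16Aux.mulVec_apply' (k+1) A v i]; exact congrFun hv i
  have hv0 : ∑ j : Fin (k+1),
      ((∑ a, ∑ d, b a * b d * lam a ^ (0:ℕ) * lam d ^ (j:ℕ) / (lam a + lam d))
        + if (j:ℕ) = 0 then 1 / (2 * M) else 0) * v j = -1 := by
    have h00 : ∑ j, A 0 j * v j = -1 := by simpa using hvrows 0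
    rw [← h00]
    refine Finset.sum_congr rfl fun j _ => ?_
    simp [hAdef]
  have hvpos : ∀ m : ℕ, m < k → ∑ j : Fin (k+1),
      (∑ a, ∑ d, b a * b d * lam a ^ (m+1) * lam d ^ (j:ℕ) / (lam a + lam d)) * v j = 0 := by
    intro m hm
    have h := hvrows ⟨m+1, by omega⟩
    rw [if_neg (by simp)] at h
    rw [← h]
    refine Finset.sum_congr rfl fun j _ => ?_
    show (∑ a, ∑ d, b a * b d * lam a ^ (m+1) * lam d ^ (j:ℕ) / (lam a + lam d)) * v j
        = ((∑ a, ∑ d, b a * b d * lam a ^ (m+1) * lam d ^ (j:ℕ) / (lam a + lam d))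
            + if (m+1 : ℕ) = 0 ∧ (j:ℕ) = 0 then 1/(2*M) else 0) * v j
    rw [if_neg (by simp), add_zero]
  obtain ⟨Q₀, P₀, Ph₀, hd1, hd2, hd3, hQ0c, hP0c, hPh1c, hO1c, hO2c, hO3c, hcoe⟩ :=
    Stmt16Aux.exists_core lam b c M hpos hc hM k W Z Ws Zs hW hZ hWs hZs v hv0 hvpos
  have hforward : ∀ Q P Phat : Polynomial ℝ,
      Q.natDegree ≤ k + 1 → P.natDegree ≤ k → Phat.natDegree ≤ k →
      Q.eval 0 = 0 → P.eval 0 = 0 → Phat.eval 0 = 1 →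
      (fun z => Q.eval z * Z z - Phat.eval z) =O[atTop] (fun z : ℝ => z⁻¹) →
      (fun z => Q.eval z * W z - P.eval z) =O[atTop] (fun _ : ℝ => (1 : ℝ)) →
      (fun z => Phat.eval z + P.eval z * Ws z + Q.eval z * Zs z)
        =O[atTop] (fun z : ℝ => (z ^ (k + 1))⁻¹) →
      ∀ i : Fin (k + 1),
        ∑ j : Fin (k + 1),
          (I (i : ℕ) (j : ℕ) + if (i : ℕ) = 0 ∧ (j : ℕ) = 0 then 1 / (2 * M) else 0)
            * Q.coeff ((j : ℕ) + 1)
          = if (i : ℕ) = 0 then -1 else 0 := by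
    intro Q P Phat hQd hPd hPhd hQ0' hP0' hPh1' hO1' hO2' hO3' i
    obtain ⟨hPhat, hP, hmom⟩ := Stmt16Aux.forward_core lam b c M hpos hc hM k
      W Z Ws Zs hW hZ hWs hZs Q P Phat hQ0' hP0' hO1' hO2' hO3'
    by_cases hi : (i:ℕ) = 0
    · have hgoal : ∀ j : Fin (k+1),
          (I (i : ℕ) (j : ℕ) + if (i : ℕ) = 0 ∧ (j : ℕ) = 0 then 1 / (2 * M) else 0)
            * Q.coeff ((j : ℕ) + 1)
          = ((∑ a, ∑ d, b a * b d * lam a ^ (0:ℕ) * lam d ^ (j:ℕ) / (lam a + lam d))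
              + if (j:ℕ) = 0 then 1/(2*M) else 0) * Q.coeff ((j:ℕ)+1) := by
        intro j
        rw [hI, hi]
        simp
      rw [Finset.sum_congr rfl (fun j _ => hgoal j),
        Stmt16Aux.row0 lam b c M hpos hc hM k Q hQ0' hQd, ← hPhat, hPh1', if_pos hi]
    · have him : (i:ℕ) = ((i:ℕ)-1)+1 := by omega
      have hgoal : ∀ j : Fin (k+1),
          (I (i : ℕ) (j : ℕ) + if (i : ℕ) = 0 ∧ (j : ℕ) = 0 then 1 / (2 * M) else 0)
            * Q.coeff ((j : ℕ) + 1)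
          = (∑ a, ∑ d, b a * b d * lam a ^ (((i:ℕ)-1)+1) * lam d ^ (j:ℕ) / (lam a + lam d))
              * Q.coeff ((j:ℕ)+1) := by
        intro j
        rw [hI, if_neg (by simp [hi]), add_zero, ← him]
      rw [Finset.sum_congr rfl (fun j _ => hgoal j),
        Stmt16Aux.rowpos lam b hpos ((i:ℕ)-1) Q hQ0' hQd,
        hmom ((i:ℕ)-1) (by have := i.isLt; omega), neg_zero, if_neg hi]
  constructor
  · refine ⟨(Q₀, P₀, Ph₀), ⟨hd1, hd2, hd3, hQ0c, hP0c, hPh1c, hO1c, hO2c, hO3c⟩, ?_⟩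
    rintro ⟨Q, P, Phat⟩ ⟨hQd, hPd, hPhd, hQ0', hP0', hPh1', hO1', hO2', hO3'⟩
    have hsys := hforward Q P Phat hQd hPd hPhd hQ0' hP0' hPh1' hO1' hO2' hO3'
    have hsys0 := hforward Q₀ P₀ Ph₀ hd1 hd2 hd3 hQ0c hP0c hPh1c hO1c hO2c hO3c
    have hmv : A.mulVec (fun j => Q.coeff ((j:ℕ)+1)) = A.mulVec (fun j => Q₀.coeff ((j:ℕ)+1)) := by
      funext i
      rw [Stmt16Aux.mulVec_apply', Stmt16Aux.mulVec_apply']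
      have hAI : ∀ j : Fin (k+1), A i j
          = I (i : ℕ) (j : ℕ) + if (i : ℕ) = 0 ∧ (j : ℕ) = 0 then 1 / (2 * M) else 0 := by
        intro j
        rw [hI]
      calc ∑ j, A i j * Q.coeff ((j:ℕ)+1)
          = ∑ j : Fin (k+1), (I (i : ℕ) (j : ℕ)
              + if (i : ℕ) = 0 ∧ (j : ℕ) = 0 then 1 / (2 * M) else 0) * Q.coeff ((j:ℕ)+1) :=
            Finset.sum_congr rfl fun j _ => by rw [hAI j]
        _ = if (i : ℕ) = 0 then -1 else 0 := hsys i
        _ = ∑ j : Fin (k+1), (I (i : ℕ) (j : ℕ)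
              + if (i : ℕ) = 0 ∧ (j : ℕ) = 0 then 1 / (2 * M) else 0) * Q₀.coeff ((j:ℕ)+1) :=
            (hsys0 i).symm
        _ = ∑ j, A i j * Q₀.coeff ((j:ℕ)+1) :=
            Finset.sum_congr rfl fun j _ => by rw [hAI j]
    have hveq : (fun j : Fin (k+1) => Q.coeff ((j:ℕ)+1)) = (fun j : Fin (k+1) => Q₀.coeff ((j:ℕ)+1)) :=
      hbij.1 hmv
    have hQeq : Q = Q₀ := by
      apply Polynomial.ext
      intro m
      match m with
      | 0 =>
        rw [Polynomial.coeff_zero_eq_eval_zero, Polynomial.coeff_zero_eq_eval_zero, hQ0', hQ0c]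
      | (m+1) =>
        have hQd' : Q.natDegree ≤ k + 1 := hQd
        have hQ0d' : Q₀.natDegree ≤ k + 1 := hd1
        by_cases hm : m < k+1
        · exact congrFun hveq ⟨m, hm⟩
        · rw [Polynomial.coeff_eq_zero_of_natDegree_lt (by omega),
            Polynomial.coeff_eq_zero_of_natDegree_lt (by omega)]
    obtain ⟨hPhat, hP, -⟩ := Stmt16Aux.forward_core lam b c M hpos hc hM k
      W Z Ws Zs hW hZ hWs hZs Q P Phat hQ0' hP0' hO1' hO2' hO3'
    obtain ⟨hPhat0, hP0x, -⟩ := Stmt16Aux.forward_core lam b c M hpos hc hM k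
      W Z Ws Zs hW hZ hWs hZs Q₀ P₀ Ph₀ hQ0c hP0c hO1c hO2c hO3c
    have hPheq : Phat = Ph₀ := by rw [hPhat, hPhat0, hQeq]
    have hPeq : P = P₀ := by rw [hP, hP0x, hQeq]
    simp only [Prod.mk.injEq]
    exact ⟨hQeq, hPeq, hPheq⟩
  · exact hforward
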